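/- The sequence (s^{(k)})_{k∈ℕ} is a Schauder basis of (N̄^q_{Δ⁻})_0: every x ∈ (N̄^q_{Δ⁻})_0 has a unique representation x = ∑_{k=0}^∞ λ_k s^{(k)}, where the partial sums converge to x in the norm ‖x‖ = sup_n |τ_n(x)| and the coefficients are λ_k = τ_k(x). -/

import Mathlib

open Finset Filter Topology

namespace NqDelta

noncomputable section

/-- `Qs q n = ∑_{i=0}^n q i`. -/
def Qs (q : ℕ → ℝ) (n : ℕ) : ℝ := ∑ i ∈ Finset.range (n + 1), q i

/-- The difference operator `(Δ⁻ x)_k = x_{k-1} - x_k`, with `x_{-1} = 0`. -/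
def deltaM (x : ℕ → ℂ) (k : ℕ) : ℂ := (if k = 0 then 0 else x (k - 1)) - x k

/-- `τ_n(x) = (1/Q_n) ∑_{k=0}^n q_k (Δ⁻ x)_k`. -/
def tau (q : ℕ → ℝ) (x : ℕ → ℂ) (n : ℕ) : ℂ :=
  ((Qs q n : ℂ))⁻¹ * ∑ k ∈ Finset.range (n + 1), (q k : ℂ) * deltaM x k

/-- The space `(N̄^q_{Δ⁻})_0 = {x : τ_n(x) → 0}`. -/
def Nzero (q : ℕ → ℝ) : Set (ℕ → ℂ) := {x | Tendsto (tau q x) atTop (𝓝 0)}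

/-- The space `(N̄^q_{Δ⁻}) = {x : (τ_n(x)) converges}`. -/
def Nconv (q : ℕ → ℝ) : Set (ℕ → ℂ) := {x | ∃ l : ℂ, Tendsto (tau q x) atTop (𝓝 l)}

/-- The space `(N̄^q_{Δ⁻})_∞ = {x : sup_n |τ_n(x)| < ∞}`. -/
def Ninf (q : ℕ → ℝ) : Set (ℕ → ℂ) := {x | ∃ M : ℝ, ∀ n, ‖tau q x n‖ ≤ M}

/-- The norm `‖x‖ = sup_n |τ_n(x)|`. -/
def Nnorm (q : ℕ → ℝ) (x : ℕ → ℂ) : ℝ := ⨆ n, ‖tau q x n‖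

/-- The `m`-th section `x^{[m]} = (x_0, …, x_m, 0, 0, …)` of a sequence `x`. -/
def secTrunc (x : ℕ → ℂ) (m : ℕ) : ℕ → ℂ := fun k => if k ≤ m then x k else 0

/-- The sequence `s^{(k)}`: `s^{(k)}_n = Q_k(1/q_{k+1} - 1/q_k)` for `n > k`,
`s^{(k)}_k = -Q_k/q_k`, and `s^{(k)}_n = 0` for `n < k`. -/
def sseq (q : ℕ → ℝ) (k : ℕ) : ℕ → ℂ := fun n =>
  if n < k then 0
  else if n = k then ((-(Qs q k / q k) : ℝ) : ℂ)
  else ((Qs q k * (1 / q (k + 1) - 1 / q k) : ℝ) : ℂ)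

/-- The sequence `s^{(-1)}`, with `s^{(-1)}_n = ∑_{k=0}^{n-1} Q_k(1/q_{k+1} - 1/q_k) - Q_n/q_n`. -/
def sminus (q : ℕ → ℝ) : ℕ → ℂ := fun n =>
  (((∑ k ∈ Finset.range n, Qs q k * (1 / q (k + 1) - 1 / q k)) - Qs q n / q n : ℝ) : ℂ)

/-- The matrix `C = (c_{nk})` associated with a sequence `a`. -/
def Cmat (q : ℕ → ℝ) (a : ℕ → ℂ) (n k : ℕ) : ℂ :=
  if k < n then ((Qs q k * (1 / q (k + 1) - 1 / q k) : ℝ) : ℂ) * ∑ j ∈ Finset.Icc (k + 1) n, a j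
  else if k = n then -(((Qs q n / q n : ℝ) : ℂ) * a n)
  else 0

/-- `exprD q a m = ∑_{k=0}^{m-1} Q_k |(1/q_{k+1} - 1/q_k) ∑_{j=k+1}^m a_j| + |Q_m a_m / q_m|`. -/
def exprD (q : ℕ → ℝ) (a : ℕ → ℂ) (m : ℕ) : ℝ :=
  (∑ k ∈ Finset.range m,
      Qs q k * ‖((1 / q (k + 1) - 1 / q k : ℝ) : ℂ) * ∑ j ∈ Finset.Icc (k + 1) m, a j‖) +
    ‖((Qs q m / q m : ℝ) : ℂ) * a m‖

/-- The space `c₀` of null complex sequences. -/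
def czero : Set (ℕ → ℂ) := {y | Tendsto y atTop (𝓝 0)}

/-- The space `c` of convergent complex sequences. -/
def cconv : Set (ℕ → ℂ) := {y | ∃ l : ℂ, Tendsto y atTop (𝓝 l)}

/-- The space `ℓ_∞` of bounded complex sequences. -/
def linf : Set (ℕ → ℂ) := {y | ∃ M : ℝ, ∀ n, ‖y n‖ ≤ M}

/-- `A ∈ (X, Y)`: for every `x ∈ X` every row series `A_n(x)` converges and `Ax ∈ Y`. -/
def matMem (A : ℕ → ℕ → ℂ) (X Y : Set (ℕ → ℂ)) : Prop :=
  ∀ x ∈ X, ∃ y ∈ Y, ∀ n,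
    Tendsto (fun m => ∑ k ∈ Finset.range (m + 1), A n k * x k) atTop (𝓝 (y n))

/-- Condition (C): `sup_{m,n} exprD q (A n) m < ∞`. -/
def condC (q : ℕ → ℝ) (A : ℕ → ℕ → ℂ) : Prop := ∃ M : ℝ, ∀ m n, exprD q (A n) m ≤ M

/-- `‖A‖^{(s)} = sup_{n > s} sup_m exprD q (A n) m`. -/
def normS (q : ℕ → ℝ) (A : ℕ → ℕ → ℂ) (s : ℕ) : ℝ :=
  ⨆ n, ⨆ (_ : s < n), ⨆ m, exprD q (A n) m

/-- The supremum distance `sup_n |y_n - z_n|` between two sequences. -/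
def supDist (y z : ℕ → ℂ) : ℝ := ⨆ n, ‖y n - z n‖

/-- The Hausdorff measure of noncompactness of `S` as a subset of the metric space `Y`
(with the supremum metric): `inf {ε > 0 : S has a finite ε-net in Y}`. -/
def chiIn (Y S : Set (ℕ → ℂ)) : ℝ :=
  sInf {ε : ℝ | 0 < ε ∧ ∃ T : Finset (ℕ → ℂ), (↑T : Set (ℕ → ℂ)) ⊆ Y ∧
    ∀ y ∈ S, ∃ t ∈ T, supDist y t < ε}

/-- The image `A F` of the closed unit ball `F = {x ∈ X : ‖x‖ ≤ 1}` under the matrix map `A`. -/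
def matImageBall (q : ℕ → ℝ) (A : ℕ → ℕ → ℂ) (X : Set (ℕ → ℂ)) : Set (ℕ → ℂ) :=
  {y | ∃ x, x ∈ X ∧ Nnorm q x ≤ 1 ∧ ∀ n,
    Tendsto (fun m => ∑ k ∈ Finset.range (m + 1), A n k * x k) atTop (𝓝 (y n))}

end

end NqDelta

open NqDelta

section Aux

variable (q : ℕ → ℝ)

lemma Qs_pos' (hq : ∀ k, 0 < q k) (n : ℕ) : 0 < Qs q n :=
  Finset.sum_pos (fun i _ => hq i) (by simp)

lemma deltaM_sub' (x y : ℕ → ℂ) (m : ℕ) :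
    deltaM (x - y) m = deltaM x m - deltaM y m := by
  simp only [deltaM, Pi.sub_apply]
  split <;> ring

lemma deltaM_sum' {ι : Type*} (s : Finset ι) (f : ι → ℕ → ℂ) (m : ℕ) :
    deltaM (∑ k ∈ s, f k) m = ∑ k ∈ s, deltaM (f k) m := by
  simp only [deltaM, Finset.sum_apply, Finset.sum_sub_distrib]
  split <;> simp

lemma deltaM_smul' (c : ℂ) (x : ℕ → ℂ) (m : ℕ) :
    deltaM (c • x) m = c * deltaM x m := by
  simp only [deltaM, Pi.smul_apply, smul_eq_mul]
  split <;> ring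

lemma tau_sub' (x y : ℕ → ℂ) (n : ℕ) :
    tau q (x - y) n = tau q x n - tau q y n := by
  simp only [tau, deltaM_sub', mul_sub, Finset.sum_sub_distrib]

lemma tau_sum' {ι : Type*} (s : Finset ι) (f : ι → ℕ → ℂ) (n : ℕ) :
    tau q (∑ k ∈ s, f k) n = ∑ k ∈ s, tau q (f k) n := by
  simp only [tau, deltaM_sum', Finset.mul_sum]
  exact Finset.sum_comm

lemma tau_smul' (c : ℂ) (x : ℕ → ℂ) (n : ℕ) :
    tau q (c • x) n = c * tau q x n := by
  simp only [tau, deltaM_smul', Finset.mul_sum]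
  exact Finset.sum_congr rfl fun i _ => by ring

lemma deltaM_sseq' (hq : ∀ k, 0 < q k) (k m : ℕ) :
    deltaM (sseq q k) m =
      if m = k then ((Qs q k / q k : ℝ) : ℂ)
      else if m = k + 1 then ((-(Qs q k / q (k + 1)) : ℝ) : ℂ) else 0 := by
  have hk := (hq k).ne'
  have hk1 := (hq (k + 1)).ne'
  unfold deltaM sseq
  rcases lt_trichotomy m k with h | rfl | h
  · have h0 : m ≠ k := h.ne
    have h1 : m ≠ k + 1 := by omega
    have hm1 : m - 1 < k := by omega
    simp [h, h0, h1, hm1]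
  · rcases Nat.eq_zero_or_pos m with rfl | hkpos
    · norm_num
    · have hlt : m - 1 < m := by omega
      simp [hkpos.ne', hlt, Nat.not_lt.mpr (le_refl m)]
  · have h0 : m ≠ k := h.ne'
    have hnl : ¬ m < k := by omega
    have hm0 : m ≠ 0 := by omega
    rcases eq_or_ne m (k + 1) with rfl | h1
    · simp [hnl, h0, hm0, Nat.not_lt.mpr (le_refl k)]
      field_simp
      ring
    · have hml : ¬ m - 1 < k := by omega
      have hmk : m - 1 ≠ k := by omega
      simp [hnl, h0, h1, hm0, hml, hmk]

lemma tau_sseq' (hq : ∀ k, 0 < q k) (k n : ℕ) :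
    tau q (sseq q k) n = if n = k then 1 else 0 := by
  have hQ : (Qs q k : ℂ) ≠ 0 := by
    exact_mod_cast (Qs_pos' q hq k).ne'
  have hterm : ∀ m, (q m : ℂ) * deltaM (sseq q k) m =
      (if m = k then ((Qs q k : ℝ) : ℂ) else 0) +
      (if m = k + 1 then (-((Qs q k : ℝ) : ℂ)) else 0) := by
    intro m
    rw [deltaM_sseq' q hq]
    rcases eq_or_ne m k with rfl | h0
    · have hmm : m ≠ m + 1 := by omega
      have hmc : (q m : ℂ) ≠ 0 := by exact_mod_cast (hq m).ne'
      simp only [if_pos rfl, if_neg hmm, add_zero]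
      push_cast
      exact mul_div_cancel₀ _ hmc
    · rcases eq_or_ne m (k + 1) with rfl | h1
      · have hmc : (q (k + 1) : ℂ) ≠ 0 := by exact_mod_cast (hq (k + 1)).ne'
        simp only [if_neg h0, if_pos rfl, zero_add]
        push_cast
        rw [mul_neg, mul_div_cancel₀ _ hmc]
      · simp [h0, h1]
  have hsum : ∑ m ∈ Finset.range (n + 1), (q m : ℂ) * deltaM (sseq q k) m =
      (if k ≤ n then ((Qs q k : ℝ) : ℂ) else 0) +
      (if k + 1 ≤ n then (-((Qs q k : ℝ) : ℂ)) else 0) := by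
    simp only [hterm, Finset.sum_add_distrib, Finset.sum_ite_eq' (Finset.range (n + 1)),
      Finset.mem_range, Nat.lt_succ_iff]
  unfold tau
  rw [hsum]
  rcases lt_trichotomy n k with h | rfl | h
  · rw [if_neg (Nat.not_le.mpr h), if_neg (by omega), if_neg h.ne, add_zero, mul_zero]
  · rw [if_pos le_rfl, if_neg (by omega), if_pos rfl, add_zero, inv_mul_cancel₀ hQ]
  · rw [if_pos h.le, if_pos (by omega : k + 1 ≤ n), if_neg h.ne', add_neg_cancel, mul_zero]

lemma tau_rem' (hq : ∀ k, 0 < q k) (x : ℕ → ℂ) (lam : ℕ → ℂ) (m n : ℕ) :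
    tau q (x - ∑ k ∈ Finset.range (m + 1), lam k • sseq q k) n =
      tau q x n - if n ≤ m then lam n else 0 := by
  rw [tau_sub', tau_sum']
  congr 1
  simp only [tau_smul', tau_sseq' q hq, mul_ite, mul_one, mul_zero]
  simp [Finset.sum_ite_eq, Nat.lt_succ_iff]

end Aux
open NqDelta
/-- `(s^{(k)})_{k∈ℕ}` is a Schauder basis of `(N̄^q_{Δ⁻})_0`: every `x` in the
space has the unique representation `x = ∑_k λ_k s^{(k)}` with `λ_k = τ_k(x)`, the partial
sums converging to `x` in the norm `‖x‖ = sup_n |τ_n(x)|`. -/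
theorem stmt_3 (q : ℕ → ℝ) (hq : ∀ k, 0 < q k) :
    (∀ k, sseq q k ∈ Nzero q) ∧
    ∀ x ∈ Nzero q,
      -- existence: the partial sums with coefficients `λ_k = τ_k(x)` converge to `x` in norm
      (Tendsto (fun m => Nnorm q (x - ∑ k ∈ Finset.range (m + 1), tau q x k • sseq q k))
        atTop (𝓝 0)) ∧
      -- uniqueness of the coefficients
      (∀ lam : ℕ → ℂ,
        Tendsto (fun m => Nnorm q (x - ∑ k ∈ Finset.range (m + 1), lam k • sseq q k))
          atTop (𝓝 0) →
        lam = fun k => tau q x k) := by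
  constructor
  · intro k
    have hev : tau q (sseq q k) =ᶠ[atTop] (fun _ => (0 : ℂ)) := by
      filter_upwards [eventually_gt_atTop k] with n hn
      rw [tau_sseq' q hq, if_neg hn.ne']
    exact Filter.Tendsto.congr' (hev.symm) tendsto_const_nhds
  · intro x hx
    have hxn : Tendsto (fun n => ‖tau q x n‖) atTop (𝓝 0) := by
      simpa using hx.norm
    constructor
    · rw [Metric.tendsto_atTop]
      intro ε hε
      obtain ⟨N, hN⟩ := (Metric.tendsto_atTop.mp hxn (ε / 2) (by linarith))
      refine ⟨N, fun m hm => ?_⟩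
      have h0 : 0 ≤ Nnorm q (x - ∑ k ∈ Finset.range (m + 1), tau q x k • sseq q k) :=
        Real.iSup_nonneg fun n => norm_nonneg _
      have hle : Nnorm q (x - ∑ k ∈ Finset.range (m + 1), tau q x k • sseq q k) ≤ ε / 2 := by
        refine ciSup_le fun n => ?_
        rw [tau_rem' q hq]
        by_cases hn : n ≤ m
        · rw [if_pos hn, sub_self, norm_zero]; linarith
        · rw [if_neg hn, sub_zero]
          have := hN n (by omega)
          rw [Real.dist_eq, sub_zero, abs_of_nonneg (norm_nonneg _)] at this
          linarith
      rw [Real.dist_eq, sub_zero, abs_of_nonneg h0]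
      linarith
    · intro lam hlam
      funext j
      have key : ∀ m, j ≤ m → ‖tau q x j - lam j‖ ≤
          Nnorm q (x - ∑ k ∈ Finset.range (m + 1), lam k • sseq q k) := by
        intro m hm
        obtain ⟨C, hC⟩ := hxn.bddAbove_range
        set D : ℝ := ∑ k ∈ Finset.range (m + 1), ‖lam k‖ with hD
        have hb : BddAbove (Set.range fun n =>
            ‖tau q (x - ∑ k ∈ Finset.range (m + 1), lam k • sseq q k) n‖) := by
          refine ⟨C + D, ?_⟩
          rintro _ ⟨n, rfl⟩
          show ‖tau q (x - ∑ k ∈ Finset.range (m + 1), lam k • sseq q k) n‖ ≤ C + D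
          rw [tau_rem' q hq]
          have h1 : ‖tau q x n‖ ≤ C := hC ⟨n, rfl⟩
          have h2 : ‖if n ≤ m then lam n else 0‖ ≤ D := by
            by_cases hn : n ≤ m
            · rw [if_pos hn]
              exact Finset.single_le_sum (f := fun k => ‖lam k‖)
                (fun i _ => norm_nonneg _) (Finset.mem_range.mpr (by omega))
            · rw [if_neg hn, norm_zero]
              exact Finset.sum_nonneg fun i _ => norm_nonneg _
          calc ‖tau q x n - if n ≤ m then lam n else 0‖
              ≤ ‖tau q x n‖ + ‖if n ≤ m then lam n else 0‖ := norm_sub_le _ _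
            _ ≤ C + D := add_le_add h1 h2
        have h3 := le_ciSup hb j
        rw [tau_rem' q hq, if_pos hm] at h3
        exact h3
      have hle0 : ‖tau q x j - lam j‖ ≤ 0 :=
        ge_of_tendsto hlam (eventually_atTop.mpr ⟨j, key⟩)
      have : tau q x j - lam j = 0 := by
        have := le_antisymm hle0 (norm_nonneg _)
        rwa [norm_eq_zero] at this
      simpa [eq_comm, sub_eq_zero] using this
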